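/- Let (X,r,μ) be an ultra-metric measure space with compact support and assume (X,r,μ) is binary, i.e. for μ⊗μ⊗μ⊗μ-almost all quadruples (x₁,x₂,x₃,x₄) in X⁴, r(x₁,x₂) = r(x₃,x₄) implies (x₁ = x₃ and x₂ = x₄) or (x₁ = x₄ and x₂ = x₃). Then for every h > 0, every family of closed h-representatives (τ_i)_{i∈I} and every family of open h-representatives (τ'_j)_{j∈J}, the cardinality of J is at most the cardinality of I plus one. -/

import Mathlib

open MeasureTheory Metric

/-- The support of a Borel measure on a metric space: the set of points all of whose
open neighborhoods have positive measure. -/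
def msupp {X : Type*} [MetricSpace X] [MeasurableSpace X] (μ : Measure X) : Set X :=
  {x | ∀ ε : ℝ, 0 < ε → 0 < μ (ball x ε)}

/-- A family of closed `h`-representatives: points of the support whose closed `h`-balls are
pairwise `μ`-disjoint and together carry the total mass of `μ`. -/
def IsClosedRepFamily {X : Type*} [MetricSpace X] [MeasurableSpace X]
    (μ : Measure X) (h : ℝ) {ι : Type*} (τ : ι → X) : Prop :=
  (∀ i, τ i ∈ msupp μ) ∧
  (∀ i j : ι, i ≠ j → μ (closedBall (τ i) h ∩ closedBall (τ j) h) = 0) ∧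
  (∑' i, μ (closedBall (τ i) h) = μ Set.univ)

/-- A family of open `h`-representatives: points of the support whose open `h`-balls are
pairwise `μ`-disjoint and together carry the total mass of `μ`. -/
def IsOpenRepFamily {X : Type*} [MetricSpace X] [MeasurableSpace X]
    (μ : Measure X) (h : ℝ) {ι : Type*} (τ : ι → X) : Prop :=
  (∀ i, τ i ∈ msupp μ) ∧
  (∀ i j : ι, i ≠ j → μ (ball (τ i) h ∩ ball (τ j) h) = 0) ∧
  (∑' i, μ (ball (τ i) h) = μ Set.univ)

section aux
variable {X : Type*} [MetricSpace X]

lemma ultra_cb_eq (hultra : ∀ x y z : X, dist x y ≤ max (dist x z) (dist z y))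
    {x y : X} {h : ℝ} (hne : (closedBall x h ∩ closedBall y h).Nonempty) :
    closedBall x h = closedBall y h := by
  obtain ⟨z, hzx, hzy⟩ := hne
  have key : ∀ a b : X, z ∈ closedBall a h → z ∈ closedBall b h →
      closedBall a h ⊆ closedBall b h := by
    intro a b hza hzb w hw
    rw [mem_closedBall] at *
    calc dist w b ≤ max (dist w z) (dist z b) := hultra w b z
      _ ≤ h := by
        refine max_le ?_ hzb
        calc dist w z ≤ max (dist w a) (dist a z) := hultra w z a
          _ ≤ h := max_le hw (by rwa [dist_comm])
  exact Set.Subset.antisymm (key x y hzx hzy) (key y x hzy hzx)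

lemma ultra_ball_eq (hultra : ∀ x y z : X, dist x y ≤ max (dist x z) (dist z y))
    {x y : X} {h : ℝ} (hne : (ball x h ∩ ball y h).Nonempty) :
    ball x h = ball y h := by
  obtain ⟨z, hzx, hzy⟩ := hne
  have key : ∀ a b : X, z ∈ ball a h → z ∈ ball b h →
      ball a h ⊆ ball b h := by
    intro a b hza hzb w hw
    rw [mem_ball] at *
    calc dist w b ≤ max (dist w z) (dist z b) := hultra w b z
      _ < h := by
        refine max_lt ?_ hzb
        calc dist w z ≤ max (dist w a) (dist a z) := hultra w z a
          _ < h := max_lt hw (by rwa [dist_comm])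
  exact Set.Subset.antisymm (key x y hzx hzy) (key y x hzy hzx)

lemma ultra_dist_eq (hultra : ∀ x y z : X, dist x y ≤ max (dist x z) (dist z y))
    {s t x y : X} {h : ℝ}
    (hx : x ∈ ball s h) (hy : y ∉ ball s h)
    (hx' : x ∈ closedBall t h) (hy' : y ∈ closedBall t h) :
    dist x y = h := by
  refine le_antisymm ?_ ?_
  · calc dist x y ≤ max (dist x t) (dist t y) := hultra x y t
      _ ≤ h := max_le hx' (by rw [dist_comm]; exact hy')
  · by_contra hlt
    push_neg at hlt
    apply hy
    rw [mem_ball]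
    calc dist y s ≤ max (dist y x) (dist x s) := hultra y s x
      _ < h := max_lt (by rwa [dist_comm]) hx

lemma key_binary {X : Type*} [MetricSpace X] [MeasurableSpace X]
    (μ : Measure X) [IsFiniteMeasure μ]
    (hbin : ∀ᵐ q ∂((μ.prod μ).prod (μ.prod μ)),
      dist q.1.1 q.1.2 = dist q.2.1 q.2.2 →
        (q.1.1 = q.2.1 ∧ q.1.2 = q.2.2) ∨ (q.1.1 = q.2.2 ∧ q.1.2 = q.2.1))
    (A B C D : Set X)
    (hd : ∀ x₁ ∈ A, ∀ x₂ ∈ B, ∀ x₃ ∈ C, ∀ x₄ ∈ D, dist x₁ x₂ = dist x₃ x₄)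
    (hv : ∀ x₁ ∈ A, ∀ x₂ ∈ B, ∀ x₃ ∈ C, ∀ x₄ ∈ D,
      ¬((x₁ = x₃ ∧ x₂ = x₄) ∨ (x₁ = x₄ ∧ x₂ = x₃))) :
    μ A * μ B * (μ C * μ D) = 0 := by
  have h0 : ((μ.prod μ).prod (μ.prod μ)) ((A ×ˢ B) ×ˢ (C ×ˢ D)) = 0 := by
    refine measure_mono_null ?_ (ae_iff.mp hbin)
    rintro ⟨⟨x₁, x₂⟩, ⟨x₃, x₄⟩⟩ ⟨⟨h1, h2⟩, ⟨h3, h4⟩⟩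
    simp only [Set.mem_setOf_eq]
    intro hP
    exact hv _ h1 _ h2 _ h3 _ h4 (hP (hd _ h1 _ h2 _ h3 _ h4))
  rwa [Measure.prod_prod, Measure.prod_prod, Measure.prod_prod] at h0

end aux

/-- In a binary ultra-metric measure space with compact support, for every `h > 0` the
number of open `h`-representatives exceeds the number of closed `h`-representatives by at
most one. -/
theorem stmt16 {X : Type*} [MetricSpace X] [CompleteSpace X]
    [TopologicalSpace.SeparableSpace X] [MeasurableSpace X] [BorelSpace X]
    (hultra : ∀ x y z : X, dist x y ≤ max (dist x z) (dist z y))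
    (μ : Measure X) [IsFiniteMeasure μ]
    (hcomp : IsCompact (msupp μ))
    (hbin : ∀ᵐ q ∂((μ.prod μ).prod (μ.prod μ)),
      dist q.1.1 q.1.2 = dist q.2.1 q.2.2 →
        (q.1.1 = q.2.1 ∧ q.1.2 = q.2.2) ∨ (q.1.1 = q.2.2 ∧ q.1.2 = q.2.1))
    (h : ℝ) (hh : 0 < h)
    {ιc ιo : Type} [Countable ιc] [Countable ιo]
    (τ : ιc → X) (τ' : ιo → X)
    (hτ : IsClosedRepFamily μ h τ) (hτ' : IsOpenRepFamily μ h τ') :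
    Cardinal.mk ιo ≤ Cardinal.mk ιc + 1 := by
  classical
  obtain ⟨hτs, hτd, hτsum⟩ := hτ
  obtain ⟨hτ's, hτ'd, hτ'sum⟩ := hτ'
  have poso : ∀ j, 0 < μ (ball (τ' j) h) := fun j => hτ's j h hh
  have posc : ∀ i, 0 < μ (closedBall (τ i) h) :=
    fun i => lt_of_lt_of_le (hτs i h hh) (measure_mono ball_subset_closedBall)
  -- closed rep balls are pairwise (genuinely) disjoint
  have cdisj : ∀ i j : ιc, i ≠ j → closedBall (τ i) h ∩ closedBall (τ j) h = ∅ := by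
    intro i j hij
    by_contra hne
    have heq : closedBall (τ i) h = closedBall (τ j) h :=
      ultra_cb_eq hultra (Set.nonempty_iff_ne_empty.mpr hne)
    have h0 := hτd i j hij
    rw [heq, Set.inter_self] at h0
    exact (posc j).ne' h0
  -- open rep balls are pairwise (genuinely) disjoint
  have odisj : ∀ j k : ιo, j ≠ k → ball (τ' j) h ∩ ball (τ' k) h = ∅ := by
    intro j k hjk
    by_contra hne
    have heq : ball (τ' j) h = ball (τ' k) h :=
      ultra_ball_eq hultra (Set.nonempty_iff_ne_empty.mpr hne)
    have h0 := hτ'd j k hjk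
    rw [heq, Set.inter_self] at h0
    exact (poso k).ne' h0
  -- each open rep ball is contained in some closed rep ball
  have hex : ∀ j : ιo, ∃ i : ιc, ball (τ' j) h ⊆ closedBall (τ i) h := by
    intro j
    have hU : μ (⋃ i, closedBall (τ i) h) = μ Set.univ := by
      rw [measure_iUnion ?_ (fun i => measurableSet_closedBall)]
      · exact hτsum
      · intro i j' hij
        exact Set.disjoint_iff_inter_eq_empty.mpr (cdisj i j' hij)
    have hUc : μ (⋃ i, closedBall (τ i) h)ᶜ = 0 := by
      rw [measure_compl (MeasurableSet.iUnion fun i => measurableSet_closedBall)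
        (measure_ne_top μ _), hU, tsub_self]
    have hb : μ (⋃ i, ball (τ' j) h ∩ closedBall (τ i) h) ≠ 0 := by
      intro h0
      have hsub : ball (τ' j) h ⊆
          (⋃ i, ball (τ' j) h ∩ closedBall (τ i) h) ∪ (⋃ i, closedBall (τ i) h)ᶜ := by
        intro x hx
        by_cases hxU : x ∈ ⋃ i, closedBall (τ i) h
        · obtain ⟨_, ⟨i, rfl⟩, hxi⟩ := hxU
          exact Or.inl (Set.mem_iUnion.mpr ⟨i, hx, hxi⟩)
        · exact Or.inr hxU
      have hle := (measure_mono (μ := μ) hsub).trans (measure_union_le _ _)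
      rw [h0, hUc, add_zero] at hle
      exact (poso j).ne' (le_antisymm hle zero_le)
    have : ¬ ∀ i, μ (ball (τ' j) h ∩ closedBall (τ i) h) = 0 :=
      fun hall => hb (measure_iUnion_null hall)
    push_neg at this
    obtain ⟨i, hi⟩ := this
    have hne : (ball (τ' j) h ∩ closedBall (τ i) h).Nonempty :=
      Set.nonempty_iff_ne_empty.mpr (fun he => hi (by rw [he]; exact measure_empty))
    have hcbne : (closedBall (τ' j) h ∩ closedBall (τ i) h).Nonempty :=
      hne.mono (Set.inter_subset_inter_left _ ball_subset_closedBall)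
    exact ⟨i, Set.Subset.trans ball_subset_closedBall (ultra_cb_eq hultra hcbne).subset⟩
  choose g hg using hex
  have ballne : ∀ j : ιo, (ball (τ' j) h).Nonempty := by
    intro j
    refine Set.nonempty_iff_ne_empty.mpr (fun he => (poso j).ne' ?_)
    rw [he]; exact measure_empty
  -- distance between points of distinct open rep balls in the same closed ball is h
  have hdist : ∀ j k : ιo, j ≠ k → g j = g k →
      ∀ x ∈ ball (τ' j) h, ∀ y ∈ ball (τ' k) h, dist x y = h := by
    intro j k hjk hgjk x hx y hy
    refine ultra_dist_eq hultra hx ?_ (hg j hx) ?_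
    · intro hy'
      have := odisj j k hjk
      have : y ∈ (∅ : Set X) := this ▸ ⟨hy', hy⟩
      exact this
    · rw [hgjk]; exact hg k hy
  -- no closed rep ball contains three open rep balls
  have claim2 : ∀ j k l : ιo, j ≠ k → j ≠ l → k ≠ l → g j = g k → g j = g l → False := by
    intro j k l hjk hjl hkl hgk hgl
    have hz := key_binary μ hbin (ball (τ' j) h) (ball (τ' k) h) (ball (τ' j) h)
      (ball (τ' l) h)
      (fun x₁ h1 x₂ h2 x₃ h3 x₄ h4 => by
        rw [hdist j k hjk hgk x₁ h1 x₂ h2, hdist j l hjl hgl x₃ h3 x₄ h4])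
      (fun x₁ h1 x₂ h2 x₃ h3 x₄ h4 hcon => by
        rcases hcon with ⟨_, h24⟩ | ⟨h14, _⟩
        · exact absurd (odisj k l hkl ▸ (Set.mem_inter h2 (h24 ▸ h4) : x₂ ∈ ball (τ' k) h ∩ ball (τ' l) h))
            (Set.notMem_empty x₂)
        · exact absurd (odisj j l hjl ▸ (Set.mem_inter h1 (h14 ▸ h4) : x₁ ∈ ball (τ' j) h ∩ ball (τ' l) h))
            (Set.notMem_empty x₁))
    exact mul_ne_zero (mul_ne_zero (poso j).ne' (poso k).ne')
      (mul_ne_zero (poso j).ne' (poso l).ne') hz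
  -- at most one closed rep ball contains two open rep balls
  have claim3 : ∀ j k j' k' : ιo, j ≠ k → j' ≠ k' → g j = g k → g j' = g k' →
      g j = g j' := by
    intro j k j' k' hjk hj'k' hgk hgk'
    by_contra hne
    have hcd := cdisj (g j) (g j') hne
    have mem3 : ∀ x ∈ ball (τ' j') h, x ∈ closedBall (τ (g j')) h := fun x hx => hg j' hx
    have mem4 : ∀ x ∈ ball (τ' k') h, x ∈ closedBall (τ (g j')) h := by
      intro x hx; rw [hgk']; exact hg k' hx
    have hz := key_binary μ hbin (ball (τ' j) h) (ball (τ' k) h) (ball (τ' j') h)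
      (ball (τ' k') h)
      (fun x₁ h1 x₂ h2 x₃ h3 x₄ h4 => by
        rw [hdist j k hjk hgk x₁ h1 x₂ h2, hdist j' k' hj'k' hgk' x₃ h3 x₄ h4])
      (fun x₁ h1 x₂ h2 x₃ h3 x₄ h4 hcon => by
        have hx1 : x₁ ∈ closedBall (τ (g j)) h := hg j h1
        rcases hcon with ⟨h13, _⟩ | ⟨h14, _⟩
        · exact absurd (hcd ▸ (Set.mem_inter hx1 (h13 ▸ mem3 x₃ h3) :
            x₁ ∈ closedBall (τ (g j)) h ∩ closedBall (τ (g j')) h)) (Set.notMem_empty x₁)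
        · exact absurd (hcd ▸ (Set.mem_inter hx1 (h14 ▸ mem4 x₄ h4) :
            x₁ ∈ closedBall (τ (g j)) h ∩ closedBall (τ (g j')) h)) (Set.notMem_empty x₁))
    exact mul_ne_zero (mul_ne_zero (poso j).ne' (poso k).ne')
      (mul_ne_zero (poso j').ne' (poso k').ne') hz
  -- counting
  by_cases hpair : ∃ p : ιo × ιo, p.1 ≠ p.2 ∧ g p.1 = g p.2
  · obtain ⟨⟨j0, k0⟩, hj0k0, hgj0⟩ := hpair
    have hinj : Function.Injective
        (fun j => if j = j0 then (none : Option ιc) else some (g j)) := by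
      intro a b hab
      simp only at hab
      by_cases ha : a = j0 <;> by_cases hb : b = j0
      · rw [ha, hb]
      · rw [if_pos ha, if_neg hb] at hab; exact absurd hab.symm (Option.some_ne_none _)
      · rw [if_neg ha, if_pos hb] at hab; exact absurd hab (Option.some_ne_none _)
      · rw [if_neg ha, if_neg hb] at hab
        have hgab : g a = g b := Option.some_injective _ hab
        by_contra hne
        have h1 : g a = g j0 := claim3 a b j0 k0 hne hj0k0 hgab hgj0
        exact claim2 j0 a b (fun e => ha e.symm) (fun e => hb e.symm) hne h1.symm
          (h1.symm.trans hgab)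
    calc Cardinal.mk ιo ≤ Cardinal.mk (Option ιc) := Cardinal.mk_le_of_injective hinj
      _ = Cardinal.mk ιc + 1 := Cardinal.mk_option
  · have hinj : Function.Injective g := by
      intro a b hab
      by_contra hne
      exact hpair ⟨(a, b), hne, hab⟩
    calc Cardinal.mk ιo ≤ Cardinal.mk ιc := Cardinal.mk_le_of_injective hinj
      _ ≤ Cardinal.mk ιc + 1 := le_self_add
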